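/- The hanging equilibrium manifold H = {(R, 0) ∈ SO(3) × ℝ³ : Rᵀe₃ = ρ/‖ρ‖} of the 3D pendulum is Lyapunov stable: for every neighborhood U of H there is a neighborhood W of H such that solutions starting in W remain in U for all t ≥ 0. -/

import Mathlib

open Matrix

attribute [local instance] Matrix.frobeniusNormedAddCommGroup Matrix.frobeniusNormedSpace

noncomputable def hat (ω : Fin 3 → ℝ) : Matrix (Fin 3) (Fin 3) ℝ :=
  !![0, -ω 2, ω 1; ω 2, 0, -ω 0; -ω 1, ω 0, 0]

def SO3 : Set (Matrix (Fin 3) (Fin 3) ℝ) := {R | R * Rᵀ = 1 ∧ R.det = 1}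

noncomputable def e3 : Fin 3 → ℝ := ![0, 0, 1]

noncomputable def enorm3 (v : Fin 3 → ℝ) : ℝ := Real.sqrt (v ⬝ᵥ v)

/-! ### Auxiliary definitions and lemmas for the Lyapunov argument -/

noncomputable def Vfun (J : Matrix (Fin 3) (Fin 3) ℝ) (m g : ℝ) (ρ : Fin 3 → ℝ)
    (p : Matrix (Fin 3) (Fin 3) ℝ × (Fin 3 → ℝ)) : ℝ :=
  (1/2) * (p.2 ⬝ᵥ J.mulVec p.2) + m * g * (enorm3 ρ - ρ ⬝ᵥ p.1ᵀ.mulVec e3)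

lemma dot_expand (v w : Fin 3 → ℝ) : v ⬝ᵥ w = v 0 * w 0 + v 1 * w 1 + v 2 * w 2 := by
  simp [dotProduct, Fin.sum_univ_three]

lemma vrow (Rm : Matrix (Fin 3) (Fin 3) ℝ) : Rmᵀ.mulVec e3 = fun i => Rm 2 i := by
  funext i
  simp [mulVec, dotProduct, e3, Fin.sum_univ_three]

lemma rowsq {Rm : Matrix (Fin 3) (Fin 3) ℝ} (h : Rm ∈ SO3) :
    Rm 2 0 ^ 2 + Rm 2 1 ^ 2 + Rm 2 2 ^ 2 = 1 := by
  have := congrFun (congrFun h.1 2) 2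
  simp [Matrix.mul_apply, Fin.sum_univ_three, Matrix.one_apply] at this
  nlinarith [this]

lemma enorm3_pos {ρ : Fin 3 → ℝ} (hρ : ρ ≠ 0) : 0 < enorm3 ρ := by
  apply Real.sqrt_pos.mpr
  rw [dot_expand]
  rcases Function.ne_iff.mp hρ with ⟨i, hi⟩
  fin_cases i <;> simp at hi <;> nlinarith [mul_self_nonneg (ρ 0), mul_self_nonneg (ρ 1), mul_self_nonneg (ρ 2), mul_self_pos.mpr hi]

lemma enorm3_sq (ρ : Fin 3 → ℝ) : enorm3 ρ ^ 2 = ρ 0 ^ 2 + ρ 1 ^ 2 + ρ 2 ^ 2 := by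
  rw [enorm3, Real.sq_sqrt] <;> rw [dot_expand] <;> nlinarith [sq_nonneg (ρ 0), sq_nonneg (ρ 1), sq_nonneg (ρ 2)]

lemma pot_nonneg {Rm : Matrix (Fin 3) (Fin 3) ℝ} (h : Rm ∈ SO3) {ρ : Fin 3 → ℝ} (hρ : ρ ≠ 0) :
    0 ≤ enorm3 ρ - ρ ⬝ᵥ Rmᵀ.mulVec e3 := by
  have hn := enorm3_pos hρ
  have hsq := enorm3_sq ρ
  have hr := rowsq h
  rw [vrow, dot_expand]
  set n := enorm3 ρ
  nlinarith [sq_nonneg (n * Rm 2 0 - ρ 0), sq_nonneg (n * Rm 2 1 - ρ 1), sq_nonneg (n * Rm 2 2 - ρ 2)]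

lemma pot_zero {Rm : Matrix (Fin 3) (Fin 3) ℝ} (h : Rm ∈ SO3) {ρ : Fin 3 → ℝ} (hρ : ρ ≠ 0)
    (hz : enorm3 ρ - ρ ⬝ᵥ Rmᵀ.mulVec e3 = 0) :
    Rmᵀ.mulVec e3 = (enorm3 ρ)⁻¹ • ρ := by
  have hn := enorm3_pos hρ
  have hsq := enorm3_sq ρ
  have hr := rowsq h
  rw [vrow, dot_expand] at hz
  set n := enorm3 ρ with hndef
  have key : (n * Rm 2 0 - ρ 0) ^ 2 + (n * Rm 2 1 - ρ 1) ^ 2 + (n * Rm 2 2 - ρ 2) ^ 2 = 0 := by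
    nlinarith [hz, hsq, hr]
  have h0 : n * Rm 2 0 - ρ 0 = 0 := by nlinarith [sq_nonneg (n * Rm 2 0 - ρ 0), sq_nonneg (n * Rm 2 1 - ρ 1), sq_nonneg (n * Rm 2 2 - ρ 2)]
  have h1 : n * Rm 2 1 - ρ 1 = 0 := by nlinarith [sq_nonneg (n * Rm 2 0 - ρ 0), sq_nonneg (n * Rm 2 1 - ρ 1), sq_nonneg (n * Rm 2 2 - ρ 2)]
  have h2 : n * Rm 2 2 - ρ 2 = 0 := by nlinarith [sq_nonneg (n * Rm 2 0 - ρ 0), sq_nonneg (n * Rm 2 1 - ρ 1), sq_nonneg (n * Rm 2 2 - ρ 2)]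
  rw [vrow]
  funext i
  have hn' : n ≠ 0 := ne_of_gt hn
  fin_cases i <;> simp [Pi.smul_apply] <;> field_simp <;> linarith

lemma conserve_identity (J : Matrix (Fin 3) (Fin 3) ℝ) (hJsymm : J.IsSymm) (m g : ℝ)
    (ρ : Fin 3 → ℝ) (Rm : Matrix (Fin 3) (Fin 3) ℝ) (w w' : Fin 3 → ℝ)
    (hode : J.mulVec w' = crossProduct (J.mulVec w) w + (m * g) • crossProduct ρ (Rmᵀ.mulVec e3)) :
    (1/2) * (∑ i, (w' i * (∑ j, J i j * w j) + w i * (∑ j, J i j * w' j)))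
      + m * g * (-(∑ i, ρ i * (∑ j, (Rm * hat w) j i * e3 j))) = 0 := by
  have E0 := congrFun hode 0
  have E1 := congrFun hode 1
  have E2 := congrFun hode 2
  simp only [mulVec, dotProduct, cross_apply, Fin.sum_univ_three, Pi.add_apply, Pi.smul_apply,
    smul_eq_mul, transpose_apply, e3, Matrix.cons_val_zero, Matrix.cons_val_one, Matrix.head_cons,
    Matrix.cons_val_two, Matrix.tail_cons, Matrix.cons_val', Matrix.empty_val',
    Matrix.cons_val_fin_one, mul_zero, mul_one, zero_add, add_zero] at E0 E1 E2
  simp only [Fin.sum_univ_three, Matrix.mul_apply, hat, e3, Matrix.cons_val_zero,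
    Matrix.cons_val_one, Matrix.head_cons, Matrix.cons_val_two, Matrix.tail_cons,
    Matrix.cons_val', Matrix.empty_val', Matrix.cons_val_fin_one, Matrix.head_fin_const,
    mul_zero, mul_one, zero_add, add_zero, Matrix.of_apply] at *
  simp only [hJsymm.apply 0 1, hJsymm.apply 0 2, hJsymm.apply 1 2] at E0 E1 E2 ⊢
  linear_combination w 0 * E0 + w 1 * E1 + w 2 * E2

lemma Vfun_continuous (J : Matrix (Fin 3) (Fin 3) ℝ) (m g : ℝ) (ρ : Fin 3 → ℝ) :
    Continuous (Vfun J m g ρ) := by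
  unfold Vfun
  simp only [mulVec, dotProduct, Fin.sum_univ_three, transpose_apply]
  fun_prop

lemma kin_nonneg {J : Matrix (Fin 3) (Fin 3) ℝ} (hJ : J.PosDef) (w : Fin 3 → ℝ) :
    0 ≤ w ⬝ᵥ J.mulVec w := by
  simpa using hJ.posSemidef.dotProduct_mulVec_nonneg w

lemma kin_zero {J : Matrix (Fin 3) (Fin 3) ℝ} (hJ : J.PosDef) {w : Fin 3 → ℝ}
    (h : w ⬝ᵥ J.mulVec w = 0) : w = 0 := by
  by_contra hw
  have := hJ.dotProduct_mulVec_pos hw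
  simp [h] at this

lemma coercive {J : Matrix (Fin 3) (Fin 3) ℝ} (hJ : J.PosDef) :
    ∃ μ > 0, ∀ w : Fin 3 → ℝ, μ * ‖w‖ ^ 2 ≤ w ⬝ᵥ J.mulVec w := by
  have hq : Continuous fun w : Fin 3 → ℝ => w ⬝ᵥ J.mulVec w := by
    simp only [mulVec, dotProduct, Fin.sum_univ_three]; fun_prop
  have hsne : (Metric.sphere (0 : Fin 3 → ℝ) 1).Nonempty :=
    NormedSpace.sphere_nonempty.mpr zero_le_one
  obtain ⟨u, hu, humin⟩ := (isCompact_sphere (0 : Fin 3 → ℝ) 1).exists_isMinOn hsne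
    hq.continuousOn
  have hunorm : ‖u‖ = 1 := by simpa using hu
  have hune : u ≠ 0 := fun h => by simp [h] at hunorm
  refine ⟨u ⬝ᵥ J.mulVec u, by simpa using hJ.dotProduct_mulVec_pos hune, fun w => ?_⟩
  rcases eq_or_ne w 0 with rfl | hw
  · simp
  · have hnw : 0 < ‖w‖ := norm_pos_iff.mpr hw
    set c := ‖w‖
    have hcu : ‖c⁻¹ • w‖ = 1 := by
      rw [norm_smul]; simp [c, abs_of_pos (inv_pos.mpr hnw), inv_mul_cancel₀ (ne_of_gt hnw)]
    have hle := humin (show c⁻¹ • w ∈ Metric.sphere (0 : Fin 3 → ℝ) 1 by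
      rw [Metric.mem_sphere, dist_zero_right]; exact hcu)
    have hexp : (c⁻¹ • w) ⬝ᵥ J.mulVec (c⁻¹ • w) = c⁻¹ * (c⁻¹ * (w ⬝ᵥ J.mulVec w)) := by
      rw [Matrix.mulVec_smul, smul_dotProduct, dotProduct_smul]; simp [smul_eq_mul, mul_assoc]
    have hle2 : u ⬝ᵥ J.mulVec u ≤ (c⁻¹ • w) ⬝ᵥ J.mulVec (c⁻¹ • w) := hle
    rw [hexp] at hle2
    have hc2 : (0:ℝ) < c ^ 2 := by positivity
    have hc : c ≠ 0 := ne_of_gt hnw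
    have hXid : c⁻¹ * (c⁻¹ * (w ⬝ᵥ J.mulVec w)) * c ^ 2 = w ⬝ᵥ J.mulVec w := by
      rw [pow_two]
      field_simp
    calc (u ⬝ᵥ J.mulVec u) * c ^ 2 ≤ (c⁻¹ * (c⁻¹ * (w ⬝ᵥ J.mulVec w))) * c ^ 2 := by
          nlinarith [hle2, hc2]
      _ = w ⬝ᵥ J.mulVec w := hXid

lemma SO3_entry_bound {Rm : Matrix (Fin 3) (Fin 3) ℝ} (h : Rm ∈ SO3) (i j : Fin 3) :
    |Rm i j| ≤ 1 := by
  have := congrFun (congrFun h.1 i) i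
  simp only [Matrix.mul_apply, Fin.sum_univ_three, transpose_apply, Matrix.one_apply_eq] at this
  rw [← sq_le_one_iff_abs_le_one]
  have h0 : Rm i 0 ^ 2 ≤ 1 := by nlinarith [mul_self_nonneg (Rm i 1), mul_self_nonneg (Rm i 2)]
  have h1 : Rm i 1 ^ 2 ≤ 1 := by nlinarith [mul_self_nonneg (Rm i 0), mul_self_nonneg (Rm i 2)]
  have h2 : Rm i 2 ^ 2 ≤ 1 := by nlinarith [mul_self_nonneg (Rm i 0), mul_self_nonneg (Rm i 1)]
  fin_cases j
  · exact h0
  · exact h1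
  · exact h2

lemma SO3_norm_bound {Rm : Matrix (Fin 3) (Fin 3) ℝ} (h : Rm ∈ SO3) : ‖Rm‖ ≤ 3 := by
  rw [Matrix.frobenius_norm_def]
  have hb : (∑ i, ∑ j, ‖Rm i j‖ ^ (2:ℝ)) ≤ 9 := by
    have : ∀ i j : Fin 3, ‖Rm i j‖ ^ (2:ℝ) ≤ 1 := by
      intro i j
      rw [Real.rpow_two]
      have := SO3_entry_bound h i j
      rw [Real.norm_eq_abs]
      nlinarith [abs_nonneg (Rm i j)]
    calc (∑ i, ∑ j, ‖Rm i j‖ ^ (2:ℝ)) ≤ ∑ i : Fin 3, ∑ j : Fin 3, (1:ℝ) := by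
          apply Finset.sum_le_sum; intro i _; apply Finset.sum_le_sum; intro j _; exact this i j
      _ = 9 := by simp; norm_num
  calc (∑ i, ∑ j, ‖Rm i j‖ ^ (2:ℝ)) ^ (1/2 : ℝ) ≤ (9:ℝ) ^ (1/2:ℝ) := by
        apply Real.rpow_le_rpow _ hb (by norm_num)
        positivity
    _ = 3 := by
        rw [show (9:ℝ) = 3 ^ (2:ℕ) by norm_num, ← Real.rpow_natCast 3 2,
          ← Real.rpow_mul (by norm_num)]
        norm_num

lemma SO3_closed : IsClosed SO3 := by
  have h1 : IsClosed {R : Matrix (Fin 3) (Fin 3) ℝ | R * Rᵀ = 1} :=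
    isClosed_eq (continuous_id.matrix_mul continuous_id.matrix_transpose) continuous_const
  have h2 : IsClosed {R : Matrix (Fin 3) (Fin 3) ℝ | R.det = 1} :=
    isClosed_eq continuous_id.matrix_det continuous_const
  exact h1.inter h2

lemma SO3_compact : IsCompact SO3 := by
  apply Metric.isCompact_of_isClosed_isBounded SO3_closed
  apply Bornology.IsBounded.subset (Metric.isBounded_closedBall
    (x := (0 : Matrix (Fin 3) (Fin 3) ℝ)) (r := 3))
  intro R hR
  simpa [Metric.mem_closedBall, dist_zero_right] using SO3_norm_bound hR

noncomputable def entryCLM (i j : Fin 3) : Matrix (Fin 3) (Fin 3) ℝ →L[ℝ] ℝ :=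
  LinearMap.toContinuousLinearMap
    { toFun := fun M => M i j
      map_add' := fun _ _ => rfl
      map_smul' := fun _ _ => rfl }

lemma entry_hasDerivAt {M : ℝ → Matrix (Fin 3) (Fin 3) ℝ} {M' : Matrix (Fin 3) (Fin 3) ℝ}
    {t : ℝ} (h : HasDerivAt M M' t) (i j : Fin 3) :
    HasDerivAt (fun s => M s i j) (M' i j) t := by
  exact (entryCLM i j).hasFDerivAt.comp_hasDerivAt t h

lemma Vfun_deriv (J : Matrix (Fin 3) (Fin 3) ℝ) (m g : ℝ) (ρ : Fin 3 → ℝ)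
    (R : ℝ → Matrix (Fin 3) (Fin 3) ℝ) (ω ω' : ℝ → Fin 3 → ℝ)
    (hω : ∀ t, HasDerivAt ω (ω' t) t)
    (hR : ∀ t, HasDerivAt R (R t * hat (ω t)) t) (t : ℝ) :
    HasDerivAt (fun s => Vfun J m g ρ (R s, ω s))
      ((1/2) * (∑ i, (ω' t i * (∑ j, J i j * ω t j) + ω t i * (∑ j, J i j * ω' t j)))
        + m * g * (-(∑ i, ρ i * (∑ j, (R t * hat (ω t)) j i * e3 j)))) t := by
  have hωi : ∀ i, HasDerivAt (fun s => ω s i) (ω' t i) t := fun i => hasDerivAt_pi.mp (hω t) i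
  have hRij : ∀ i j, HasDerivAt (fun s => R s i j) ((R t * hat (ω t)) i j) t :=
    fun i j => entry_hasDerivAt (hR t) i j
  have hkin : HasDerivAt (fun s => ∑ i, ω s i * (∑ j, J i j * ω s j))
      (∑ i, (ω' t i * (∑ j, J i j * ω t j) + ω t i * (∑ j, J i j * ω' t j))) t :=
    HasDerivAt.fun_sum fun i _ =>
      (hωi i).mul (HasDerivAt.fun_sum fun j _ => (hωi j).const_mul (J i j))
  have hpot : HasDerivAt (fun s => ∑ i, ρ i * (∑ j, R s j i * e3 j))
      (∑ i, ρ i * (∑ j, (R t * hat (ω t)) j i * e3 j)) t :=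
    HasDerivAt.fun_sum fun i _ =>
      (HasDerivAt.fun_sum fun j _ => (hRij j i).mul_const (e3 j)).const_mul (ρ i)
  have := (hkin.const_mul (1/2 : ℝ)).fun_add ((hpot.const_sub (enorm3 ρ)).const_mul (m * g))
  simpa only [Vfun, mulVec, dotProduct, transpose_apply, zero_sub, mul_neg, neg_mul,
    mul_comm] using this

/-- The hanging equilibrium manifold `H = {(R,0) : R ∈ SO(3), Rᵀe₃ = ρ/‖ρ‖}` is
Lyapunov stable for the 3D pendulum dynamics: every neighborhood `U` of `H`
contains a neighborhood `W` of `H` such that every solution starting in `W`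
(with attitude in `SO(3)`) stays in `U` for all `t ≥ 0`. -/
theorem hanging_manifold_stable
    (J : Matrix (Fin 3) (Fin 3) ℝ) (hJsymm : J.IsSymm) (hJpos : J.PosDef)
    (m g : ℝ) (hm : 0 < m) (hg : 0 < g) (ρ : Fin 3 → ℝ) (hρ : ρ ≠ 0)
    (H : Set (Matrix (Fin 3) (Fin 3) ℝ × (Fin 3 → ℝ)))
    (hH : H = {p | p.1 ∈ SO3 ∧ p.2 = 0 ∧ p.1ᵀ.mulVec e3 = (enorm3 ρ)⁻¹ • ρ}) :
    ∀ U : Set (Matrix (Fin 3) (Fin 3) ℝ × (Fin 3 → ℝ)), IsOpen U → H ⊆ U →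
      ∃ W : Set (Matrix (Fin 3) (Fin 3) ℝ × (Fin 3 → ℝ)), IsOpen W ∧ H ⊆ W ∧
        ∀ (R : ℝ → Matrix (Fin 3) (Fin 3) ℝ) (ω ω' : ℝ → Fin 3 → ℝ),
          (∀ t, R t ∈ SO3) →
          (∀ t, HasDerivAt ω (ω' t) t) →
          (∀ t, HasDerivAt R (R t * hat (ω t)) t) →
          (∀ t, J.mulVec (ω' t) =
            crossProduct (J.mulVec (ω t)) (ω t)
              + (m * g) • crossProduct ρ ((R t)ᵀ.mulVec e3)) →
          (R 0, ω 0) ∈ W →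
          ∀ t : ℝ, 0 ≤ t → (R t, ω t) ∈ U := by
  intro U hU hHU
  obtain ⟨μ, hμ, hcoer⟩ := coercive hJpos
  set V := Vfun J m g ρ with hVdef
  have hVcont : Continuous V := Vfun_continuous J m g ρ
  have hn := enorm3_pos hρ
  have hmg : (0:ℝ) < m * g := mul_pos hm hg
  have hVnn : ∀ p : Matrix (Fin 3) (Fin 3) ℝ × (Fin 3 → ℝ), p.1 ∈ SO3 → 0 ≤ V p := by
    intro p hp
    have h1 := kin_nonneg hJpos p.2
    have h2 := pot_nonneg hp hρ
    simp only [hVdef, Vfun]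
    nlinarith
  have hVH : ∀ p ∈ H, V p = 0 := by
    intro p hp
    rw [hH] at hp
    obtain ⟨hp1, hp2, hp3⟩ := hp
    have hdot : ρ ⬝ᵥ ((enorm3 ρ)⁻¹ • ρ) = enorm3 ρ := by
      have hsq := enorm3_sq ρ
      rw [dotProduct_smul, smul_eq_mul, dot_expand]
      have hn' : enorm3 ρ ≠ 0 := ne_of_gt hn
      field_simp
      nlinarith [hsq]
    simp only [hVdef, Vfun, hp2, hp3, hdot]
    simp
  set K : ℕ → Set (Matrix (Fin 3) (Fin 3) ℝ × (Fin 3 → ℝ)) :=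
    fun k => {p | p.1 ∈ SO3 ∧ V p ≤ ((k:ℝ)+1)⁻¹} with hKdef
  have hKclosed : ∀ k, IsClosed (K k) := by
    intro k
    have heq : K k = (Prod.fst ⁻¹' SO3) ∩ (V ⁻¹' Set.Iic ((k:ℝ)+1)⁻¹) := rfl
    rw [heq]
    exact (SO3_closed.preimage continuous_fst).inter (isClosed_Iic.preimage hVcont)
  have hKsub0 : ∀ k, K k ⊆ K 0 := by
    intro k p hp
    refine ⟨hp.1, le_trans hp.2 ?_⟩
    have h1 : (1:ℝ) ≤ (k:ℝ) + 1 := by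
      have h0 : (0:ℝ) ≤ (k:ℝ) := by positivity
      linarith
    have h2 : ((k:ℝ)+1)⁻¹ ≤ 1 := by
      rw [inv_le_one_iff₀]
      right; exact h1
    simpa using h2
  have hK0cpt : IsCompact (K 0) := by
    apply IsCompact.of_isClosed_subset
      (SO3_compact.prod (isCompact_closedBall (0 : Fin 3 → ℝ) (Real.sqrt (2/μ))))
      (hKclosed 0)
    intro p hp
    obtain ⟨hpS, hple⟩ := hp
    have hple1 : V p ≤ 1 := by simpa using hple
    have hkin := hcoer p.2
    have hpot := pot_nonneg hpS hρ
    have hkin2 : p.2 ⬝ᵥ J.mulVec p.2 ≤ 2 := by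
      simp only [hVdef, Vfun] at hple1
      nlinarith
    have hb : ‖p.2‖ ^ 2 ≤ 2 / μ := by
      rw [le_div_iff₀ hμ]
      nlinarith
    refine ⟨hpS, ?_⟩
    rw [Metric.mem_closedBall, dist_zero_right, ← Real.sqrt_sq (norm_nonneg p.2)]
    exact Real.sqrt_le_sqrt hb
  have hKcpt : ∀ k, IsCompact (K k) :=
    fun k => hK0cpt.of_isClosed_subset (hKclosed k) (hKsub0 k)
  have hex : ∃ k, K k ⊆ U := by
    by_contra hno
    push_neg at hno
    set C : ℕ → Set (Matrix (Fin 3) (Fin 3) ℝ × (Fin 3 → ℝ)) := fun k => K k \ U with hCdef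
    have hCne : ∀ k, (C k).Nonempty := by
      intro k
      rw [hCdef]
      exact Set.diff_nonempty.mpr (fun hsub => absurd hsub (by
        intro h; exact (hno k) h))
    have hCdec : ∀ k, C (k+1) ⊆ C k := by
      intro k p hp
      refine ⟨⟨hp.1.1, le_trans hp.1.2 ?_⟩, hp.2⟩
      apply inv_anti₀ (by positivity)
      push_cast
      linarith
    have hCcl : ∀ k, IsClosed (C k) := by
      intro k
      have heq : C k = K k ∩ Uᶜ := Set.diff_eq _ _
      rw [heq]
      exact (hKclosed k).inter hU.isClosed_compl
    have hC0 : IsCompact (C 0) := hK0cpt.of_isClosed_subset (hCcl 0) Set.diff_subset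
    obtain ⟨p, hp⟩ := IsCompact.nonempty_iInter_of_sequence_nonempty_isCompact_isClosed
      C hCdec hCne hC0 hCcl
    have hpK : ∀ k, p ∈ K k := fun k => (Set.mem_iInter.mp hp k).1
    have hpU : p ∉ U := (Set.mem_iInter.mp hp 0).2
    have hpS : p.1 ∈ SO3 := (hpK 0).1
    have hple : V p ≤ 0 := by
      by_contra hpos'
      push_neg at hpos'
      obtain ⟨k, hk⟩ := exists_nat_gt (V p)⁻¹
      have h3 : (V p)⁻¹ < (k:ℝ) + 1 := by linarith
      have h4 : (0:ℝ) < (k:ℝ) + 1 := by positivity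
      have h5 : ((k:ℝ)+1)⁻¹ < V p := by
        rw [inv_lt_comm₀ h4 hpos']
        exact h3
      exact absurd (hpK k).2 (not_le.mpr h5)
    have hV0 : V p = 0 := le_antisymm hple (hVnn p hpS)
    have hkinnn := kin_nonneg hJpos p.2
    have hpotnn := pot_nonneg hpS hρ
    have hk0 : p.2 ⬝ᵥ J.mulVec p.2 = 0 := by
      simp only [hVdef, Vfun] at hV0
      nlinarith
    have hpz : enorm3 ρ - ρ ⬝ᵥ p.1ᵀ.mulVec e3 = 0 := by
      simp only [hVdef, Vfun] at hV0
      nlinarith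
    have hpH : p ∈ H := by
      rw [hH]
      exact ⟨hpS, kin_zero hJpos hk0, pot_zero hpS hρ hpz⟩
    exact hpU (hHU hpH)
  obtain ⟨k, hk⟩ := hex
  refine ⟨V ⁻¹' Set.Iio ((k:ℝ)+1)⁻¹, isOpen_Iio.preimage hVcont, ?_, ?_⟩
  · intro p hp
    simp only [Set.mem_preimage, Set.mem_Iio, hVH p hp]
    positivity
  · intro R ω ω' hSO3 hω hR hode hW0 t ht
    have hder : ∀ s, HasDerivAt (fun s => V (R s, ω s)) 0 s := by
      intro s
      have h1 := Vfun_deriv J m g ρ R ω ω' hω hR s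
      rwa [conserve_identity J hJsymm m g ρ (R s) (ω s) (ω' s) (hode s)] at h1
    have hconst : V (R t, ω t) = V (R 0, ω 0) :=
      is_const_of_deriv_eq_zero (fun s => (hder s).differentiableAt)
        (fun s => (hder s).deriv) t 0
    apply hk
    refine ⟨hSO3 t, le_of_lt ?_⟩
    rw [hconst]
    exact hW0
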